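/- arXiv:2503.07064 — 2 statements merged into one kernel-verified Lean document; each statement's English description precedes it below -/
import Mathlib

section
/- Let Φ be a p×p matrix with operator norm z = ‖Φ‖ < 1 and M a p×p matrix. Then the operator norm of S₁ = ∑_{s=1}^n ∑_{t=1}^n ∑_{i=1}^{(s∧t)−1} (Φ^{t−1−i} ⊗ Φ^{s−1−i}) (M ⊗ M) ((Φᵀ)^{t−1−i} ⊗ (Φᵀ)^{s−1−i}) is bounded by C·n for a constant C depending only on z and ‖M‖. -/
open Matrix Kronecker Finset
set_option synthInstance.maxHeartbeats 1000000
set_option maxHeartbeats 2000000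
set_option linter.unusedSectionVars false

namespace S1aux
variable {m : Type*} [Fintype m] [DecidableEq m]

noncomputable def N (X : Matrix m m ℝ) : ℝ := ‖Matrix.toEuclideanCLM (𝕜 := ℝ) X‖

lemma N_nonneg (X : Matrix m m ℝ) : 0 ≤ N X := norm_nonneg _

lemma N_mul_le (X Y : Matrix m m ℝ) : N (X * Y) ≤ N X * N Y := by
  rw [N, _root_.map_mul]; exact ContinuousLinearMap.opNorm_comp_le _ _

lemma N_transpose (X : Matrix m m ℝ) : N Xᵀ = N X := by
  have h : Xᵀ = star X := by
    ext i j; simp [Matrix.conjTranspose_apply, Matrix.star_apply]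
  rw [N, h, map_star, ContinuousLinearMap.star_eq_adjoint]
  exact ContinuousLinearMap.adjoint.norm_map _

lemma N_pow_le (X : Matrix m m ℝ) (k : ℕ) : N (X ^ k) ≤ N X ^ k := by
  induction k with
  | zero => simp only [N, pow_zero, map_one]; exact ContinuousLinearMap.norm_id_le
  | succ k ih =>
    rw [pow_succ, pow_succ]
    exact (N_mul_le _ _).trans (mul_le_mul_of_nonneg_right ih (N_nonneg X))

lemma coord_le_norm (x : EuclideanSpace ℝ m) (i : m) : |x i| ≤ ‖x‖ := by
  rw [EuclideanSpace.norm_eq]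
  rw [show |x i| = Real.sqrt (‖x i‖ ^ 2) by simp [Real.sqrt_sq_eq_abs]]
  exact Real.sqrt_le_sqrt (Finset.single_le_sum (f := fun j => ‖x j‖ ^ 2)
    (fun j _ => sq_nonneg _) (mem_univ i))

lemma apply_eq (X : Matrix m m ℝ) (x : EuclideanSpace ℝ m) (i : m) :
    (Matrix.toEuclideanCLM (𝕜 := ℝ) X x) i = ∑ j, X i j * x j := by
  have := Matrix.ofLp_toEuclideanCLM (𝕜 := ℝ) X x
  have h2 := congrFun this i
  simpa [Matrix.toLin'_apply, Matrix.mulVec, dotProduct] using h2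

lemma entry_le_N (X : Matrix m m ℝ) (i j : m) : |X i j| ≤ N X := by
  have h := coord_le_norm (Matrix.toEuclideanCLM (𝕜 := ℝ) X (EuclideanSpace.single j 1)) i
  rw [apply_eq] at h
  simp only [EuclideanSpace.single_apply] at h
  have he : ∑ k, X i k * (if k = j then (1:ℝ) else 0) = X i j := by simp
  rw [he] at h
  calc |X i j| ≤ ‖Matrix.toEuclideanCLM (𝕜 := ℝ) X‖ * ‖EuclideanSpace.single j (1:ℝ)‖ :=
        h.trans (ContinuousLinearMap.le_opNorm _ _)
    _ = N X := by rw [EuclideanSpace.norm_single]; simp [N]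

lemma norm_le_sum_abs (y : EuclideanSpace ℝ m) : ‖y‖ ≤ ∑ i, |y i| := by
  have hy : y = ∑ i, EuclideanSpace.single i (y i) := by
    ext j
    rw [show (∑ i, EuclideanSpace.single i (y i)) j = ∑ i, (EuclideanSpace.single i (y i) : EuclideanSpace ℝ m) j from by rw [WithLp.ofLp_sum, Finset.sum_apply]]
    simp [EuclideanSpace.single_apply]
  calc ‖y‖ = ‖∑ i, EuclideanSpace.single i (y i)‖ := by rw [← hy]
    _ ≤ ∑ i, ‖EuclideanSpace.single i (y i)‖ := norm_sum_le _ _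
    _ = ∑ i, |y i| := by
        refine Finset.sum_congr rfl (fun i _ => ?_)
        rw [EuclideanSpace.norm_single]; simp

lemma N_le_entrySum (X : Matrix m m ℝ) : N X ≤ ∑ i, ∑ j, |X i j| := by
  refine ContinuousLinearMap.opNorm_le_bound _ (by positivity) (fun x => ?_)
  calc ‖Matrix.toEuclideanCLM (𝕜 := ℝ) X x‖
      ≤ ∑ i, |(Matrix.toEuclideanCLM (𝕜 := ℝ) X x) i| := norm_le_sum_abs _
    _ ≤ ∑ i, (∑ j, |X i j|) * ‖x‖ := by
        refine Finset.sum_le_sum (fun i _ => ?_)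
        rw [apply_eq]
        calc |∑ j, X i j * x j| ≤ ∑ j, |X i j * x j| := Finset.abs_sum_le_sum_abs _ _
          _ ≤ ∑ j, |X i j| * ‖x‖ := by
              refine Finset.sum_le_sum (fun j _ => ?_)
              rw [abs_mul]
              exact mul_le_mul_of_nonneg_left ((coord_le_norm x j)) (abs_nonneg _)
          _ = (∑ j, |X i j|) * ‖x‖ := by rw [Finset.sum_mul]
    _ = (∑ i, ∑ j, |X i j|) * ‖x‖ := by rw [Finset.sum_mul]

lemma N_kron_le {p : ℕ} (A B : Matrix (Fin p) (Fin p) ℝ) :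
    N (A ⊗ₖ B) ≤ (p:ℝ)^4 * (N A * N B) := by
  calc N (A ⊗ₖ B) ≤ ∑ i, ∑ j, |(A ⊗ₖ B) i j| := N_le_entrySum _
    _ ≤ ∑ _i : Fin p × Fin p, ∑ _j : Fin p × Fin p, N A * N B := by
        refine Finset.sum_le_sum (fun i _ => Finset.sum_le_sum (fun j _ => ?_))
        rw [Matrix.kroneckerMap_apply, abs_mul]
        exact mul_le_mul (entry_le_N _ _ _) (entry_le_N _ _ _) (abs_nonneg _) (N_nonneg _)
    _ = (p:ℝ)^4 * (N A * N B) := by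
        simp [Finset.sum_const, Finset.card_univ]
        ring


lemma geo (w : ℝ) (h0 : 0 ≤ w) (h1 : w < 1) (k : ℕ) :
    ∑ j ∈ range k, w ^ j ≤ (1 - w)⁻¹ := by
  have := Summable.sum_le_tsum (range k) (fun i _ => pow_nonneg h0 i)
    (summable_geometric_of_lt_one h0 h1)
  rwa [tsum_geometric_of_lt_one h0 h1] at this

lemma sumA (w : ℝ) (h0 : 0 ≤ w) (h1 : w < 1) (s t : ℕ) (hs : 1 ≤ s) (ht : 1 ≤ t) :
    ∑ i ∈ Icc 1 (min s t - 1), w ^ ((t - 1 - i) + (s - 1 - i)) ≤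
      (1 - w ^ 2)⁻¹ * w ^ ((t - s) + (s - t)) := by
  have hw2 : w ^ 2 < 1 := by nlinarith
  have hw20 : (0:ℝ) ≤ w ^ 2 := by positivity
  set m := min s t with hm
  calc ∑ i ∈ Icc 1 (m - 1), w ^ ((t - 1 - i) + (s - 1 - i))
      = ∑ i ∈ Icc 1 (m - 1), w ^ ((t - s) + (s - t)) * (w ^ 2) ^ (m - 1 - i) := by
        refine Finset.sum_congr rfl (fun i hi => ?_)
        rw [mem_Icc] at hi
        rw [← pow_mul, ← pow_add]
        congr 1
        omega
    _ = w ^ ((t - s) + (s - t)) * ∑ i ∈ Icc 1 (m - 1), (w ^ 2) ^ (m - 1 - i) := by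
        rw [Finset.mul_sum]
    _ = w ^ ((t - s) + (s - t)) * ∑ j ∈ range (m - 1), (w ^ 2) ^ j := by
        congr 1
        refine Finset.sum_nbij' (fun i => m - 1 - i) (fun j => m - 1 - j) ?_ ?_ ?_ ?_ ?_ <;>
          intro a ha <;> simp only [mem_Icc, mem_range] at * <;> omega
    _ ≤ w ^ ((t - s) + (s - t)) * (1 - w ^ 2)⁻¹ := by
        exact mul_le_mul_of_nonneg_left (geo _ hw20 hw2 _) (pow_nonneg h0 _)
    _ = (1 - w ^ 2)⁻¹ * w ^ ((t - s) + (s - t)) := mul_comm _ _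

lemma sumB (w : ℝ) (h0 : 0 ≤ w) (h1 : w < 1) (n s : ℕ) (hs1 : 1 ≤ s) (hs2 : s ≤ n) :
    ∑ t ∈ Icc 1 n, w ^ ((t - s) + (s - t)) ≤ 2 * (1 - w)⁻¹ := by
  have hsplit : Icc 1 n = Icc 1 s ∪ Ioc s n := by
    ext x; simp only [mem_Icc, mem_union, mem_Ioc]; omega
  have hdisj : Disjoint (Icc 1 s) (Ioc s n) := by
    simp only [Finset.disjoint_left, mem_Icc, mem_Ioc]
    intro a ha; omega
  rw [hsplit, Finset.sum_union hdisj]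
  have hA : ∑ t ∈ Icc 1 s, w ^ ((t - s) + (s - t)) ≤ (1 - w)⁻¹ := by
    have : ∑ t ∈ Icc 1 s, w ^ ((t - s) + (s - t)) = ∑ j ∈ range s, w ^ j := by
      refine Finset.sum_nbij' (fun t => s - t) (fun j => s - j) ?_ ?_ ?_ ?_ ?_ <;>
        intro a ha <;> simp only [mem_Icc, mem_range] at * <;> try omega
      congr 1; omega
    rw [this]; exact geo _ h0 h1 _
  have hB : ∑ t ∈ Ioc s n, w ^ ((t - s) + (s - t)) ≤ (1 - w)⁻¹ := by
    have h2 : ∑ t ∈ Ioc s n, w ^ ((t - s) + (s - t)) = ∑ j ∈ range (n - s), w ^ (j + 1) := by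
      refine Finset.sum_nbij' (fun t => t - s - 1) (fun j => j + s + 1) ?_ ?_ ?_ ?_ ?_ <;>
        intro a ha <;> simp only [mem_Ioc, mem_range] at * <;> try omega
      congr 1; omega
    rw [h2]
    calc ∑ j ∈ range (n - s), w ^ (j + 1) ≤ ∑ j ∈ range (n - s), w ^ j := by
          refine Finset.sum_le_sum (fun j _ => ?_)
          exact pow_le_pow_of_le_one h0 h1.le (Nat.le_succ j)
      _ ≤ (1 - w)⁻¹ := geo _ h0 h1 _
  linarith

lemma sum_main (w : ℝ) (h0 : 0 ≤ w) (h1 : w < 1) (n : ℕ) :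
    ∑ s ∈ Icc 1 n, ∑ t ∈ Icc 1 n, ∑ i ∈ Icc 1 (min s t - 1),
      w ^ ((t - 1 - i) + (s - 1 - i)) ≤ ((1 - w ^ 2)⁻¹ * (2 * (1 - w)⁻¹)) * n := by
  have hw2inv : (0:ℝ) ≤ (1 - w ^ 2)⁻¹ := by
    have h : w ^ 2 < 1 := by nlinarith
    exact inv_nonneg.mpr (by linarith)
  calc ∑ s ∈ Icc 1 n, ∑ t ∈ Icc 1 n, ∑ i ∈ Icc 1 (min s t - 1),
        w ^ ((t - 1 - i) + (s - 1 - i))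
      ≤ ∑ s ∈ Icc 1 n, ∑ t ∈ Icc 1 n, (1 - w ^ 2)⁻¹ * w ^ ((t - s) + (s - t)) := by
        refine Finset.sum_le_sum (fun s hs => Finset.sum_le_sum (fun t ht => ?_))
        rw [mem_Icc] at hs ht
        exact sumA w h0 h1 s t hs.1 ht.1
    _ = ∑ s ∈ Icc 1 n, (1 - w ^ 2)⁻¹ * ∑ t ∈ Icc 1 n, w ^ ((t - s) + (s - t)) := by
        simp [Finset.mul_sum]
    _ ≤ ∑ s ∈ Icc 1 n, (1 - w ^ 2)⁻¹ * (2 * (1 - w)⁻¹) := by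
        refine Finset.sum_le_sum (fun s hs => ?_)
        rw [mem_Icc] at hs
        exact mul_le_mul_of_nonneg_left (sumB w h0 h1 n s hs.1 hs.2) hw2inv
    _ = ((1 - w ^ 2)⁻¹ * (2 * (1 - w)⁻¹)) * n := by
        rw [Finset.sum_const, Nat.card_Icc]
        simp [nsmul_eq_mul, mul_comm]


lemma N_sum_le {α : Type*} (s : Finset α) (f : α → Matrix m m ℝ) :
    N (∑ x ∈ s, f x) ≤ ∑ x ∈ s, N (f x) := by
  rw [N, map_sum]; exact norm_sum_le _ _

lemma term_le {p : ℕ} (Φ M : Matrix (Fin p) (Fin p) ℝ) (a b : ℕ) :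
    N (((Φ ^ a) ⊗ₖ (Φ ^ b)) * (M ⊗ₖ M) * ((Φᵀ ^ a) ⊗ₖ (Φᵀ ^ b))) ≤
      (((p:ℝ)^4)^3 * (N M * N M)) * ((N Φ * N Φ) ^ (a + b)) := by
  have hz0 : 0 ≤ N Φ := N_nonneg Φ
  have hpa : (0:ℝ) ≤ (p:ℝ)^4 * (N Φ ^ a * N Φ ^ b) :=
    mul_nonneg (by positivity) (mul_nonneg (pow_nonneg hz0 _) (pow_nonneg hz0 _))
  have hX : N ((Φ ^ a) ⊗ₖ (Φ ^ b)) ≤ (p:ℝ)^4 * (N Φ ^ a * N Φ ^ b) :=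
    (N_kron_le _ _).trans (mul_le_mul_of_nonneg_left
      (mul_le_mul (N_pow_le _ _) (N_pow_le _ _) (N_nonneg _) (pow_nonneg hz0 _))
      (by positivity))
  have hZ : N ((Φᵀ ^ a) ⊗ₖ (Φᵀ ^ b)) ≤ (p:ℝ)^4 * (N Φ ^ a * N Φ ^ b) := by
    have ha : (Φᵀ) ^ a = (Φ ^ a)ᵀ := (Matrix.transpose_pow Φ a).symm
    have hb : (Φᵀ) ^ b = (Φ ^ b)ᵀ := (Matrix.transpose_pow Φ b).symm
    rw [ha, hb]
    refine (N_kron_le _ _).trans (mul_le_mul_of_nonneg_left ?_ (by positivity))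
    rw [N_transpose, N_transpose]
    exact mul_le_mul (N_pow_le _ _) (N_pow_le _ _) (N_nonneg _) (pow_nonneg hz0 _)
  have hY : N (M ⊗ₖ M) ≤ (p:ℝ)^4 * (N M * N M) := N_kron_le _ _
  calc N (((Φ ^ a) ⊗ₖ (Φ ^ b)) * (M ⊗ₖ M) * ((Φᵀ ^ a) ⊗ₖ (Φᵀ ^ b)))
      ≤ N (((Φ ^ a) ⊗ₖ (Φ ^ b)) * (M ⊗ₖ M)) * N ((Φᵀ ^ a) ⊗ₖ (Φᵀ ^ b)) := N_mul_le _ _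
    _ ≤ (N ((Φ ^ a) ⊗ₖ (Φ ^ b)) * N (M ⊗ₖ M)) * N ((Φᵀ ^ a) ⊗ₖ (Φᵀ ^ b)) :=
        mul_le_mul_of_nonneg_right (N_mul_le _ _) (N_nonneg _)
    _ ≤ (((p:ℝ)^4 * (N Φ ^ a * N Φ ^ b)) * ((p:ℝ)^4 * (N M * N M))) *
          ((p:ℝ)^4 * (N Φ ^ a * N Φ ^ b)) := by
        refine mul_le_mul (mul_le_mul hX hY (N_nonneg _) hpa) hZ (N_nonneg _) ?_
        exact mul_nonneg hpa (mul_nonneg (by positivity)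
          (mul_nonneg (N_nonneg _) (N_nonneg _)))
    _ = (((p:ℝ)^4)^3 * (N M * N M)) * ((N Φ * N Φ) ^ (a + b)) := by ring

end S1aux

/-- The norm of
`S₁ = ∑_{s=1}^n ∑_{t=1}^n ∑_{i=1}^{min(s,t)-1}
  (Φ^{t-1-i} ⊗ Φ^{s-1-i}) (M ⊗ M) ((Φᵀ)^{t-1-i} ⊗ (Φᵀ)^{s-1-i})`
is bounded by `C·n` for a constant `C` depending only on `‖Φ‖` and `‖M‖`,
when `‖Φ‖ < 1` in the operator norm. -/
theorem S1_bound {p : ℕ} (Φ M : Matrix (Fin p) (Fin p) ℝ)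
    (hz : ‖Matrix.toEuclideanCLM (𝕜 := ℝ) Φ‖ < 1) :
    ∃ C : ℝ, ∀ n : ℕ,
      ‖Matrix.toEuclideanCLM (𝕜 := ℝ)
        (∑ s ∈ Finset.Icc 1 n, ∑ t ∈ Finset.Icc 1 n, ∑ i ∈ Finset.Icc 1 (min s t - 1),
          ((Φ ^ (t - 1 - i)) ⊗ₖ (Φ ^ (s - 1 - i))) * (M ⊗ₖ M) *
            ((Φᵀ ^ (t - 1 - i)) ⊗ₖ (Φᵀ ^ (s - 1 - i))))‖ ≤ C * n := by
  classical
  set z : ℝ := S1aux.N Φ with hzdef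
  have hz1 : z < 1 := hz
  have hz0 : 0 ≤ z := S1aux.N_nonneg Φ
  set w : ℝ := z * z with hwdef
  have hw0 : 0 ≤ w := mul_nonneg hz0 hz0
  have hw1 : w < 1 := by nlinarith
  set K : ℝ := ((p:ℝ)^4)^3 * (S1aux.N M * S1aux.N M) with hKdef
  have hK0 : 0 ≤ K :=
    mul_nonneg (by positivity) (mul_nonneg (S1aux.N_nonneg M) (S1aux.N_nonneg M))
  refine ⟨K * ((1 - w ^ 2)⁻¹ * (2 * (1 - w)⁻¹)), fun n => ?_⟩
  calc ‖Matrix.toEuclideanCLM (𝕜 := ℝ)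
        (∑ s ∈ Finset.Icc 1 n, ∑ t ∈ Finset.Icc 1 n, ∑ i ∈ Finset.Icc 1 (min s t - 1),
          ((Φ ^ (t - 1 - i)) ⊗ₖ (Φ ^ (s - 1 - i))) * (M ⊗ₖ M) *
            ((Φᵀ ^ (t - 1 - i)) ⊗ₖ (Φᵀ ^ (s - 1 - i))))‖
      = S1aux.N (∑ s ∈ Finset.Icc 1 n, ∑ t ∈ Finset.Icc 1 n, ∑ i ∈ Finset.Icc 1 (min s t - 1),
          ((Φ ^ (t - 1 - i)) ⊗ₖ (Φ ^ (s - 1 - i))) * (M ⊗ₖ M) *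
            ((Φᵀ ^ (t - 1 - i)) ⊗ₖ (Φᵀ ^ (s - 1 - i)))) := rfl
    _ ≤ ∑ s ∈ Finset.Icc 1 n, ∑ t ∈ Finset.Icc 1 n, ∑ i ∈ Finset.Icc 1 (min s t - 1),
          S1aux.N (((Φ ^ (t - 1 - i)) ⊗ₖ (Φ ^ (s - 1 - i))) * (M ⊗ₖ M) *
            ((Φᵀ ^ (t - 1 - i)) ⊗ₖ (Φᵀ ^ (s - 1 - i)))) := by
        refine (S1aux.N_sum_le _ _).trans (Finset.sum_le_sum fun s _ => ?_)
        exact (S1aux.N_sum_le _ _).trans (Finset.sum_le_sum fun t _ => S1aux.N_sum_le _ _)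
    _ ≤ ∑ s ∈ Finset.Icc 1 n, ∑ t ∈ Finset.Icc 1 n, ∑ i ∈ Finset.Icc 1 (min s t - 1),
          K * w ^ ((t - 1 - i) + (s - 1 - i)) := by
        refine Finset.sum_le_sum fun s _ => Finset.sum_le_sum fun t _ =>
          Finset.sum_le_sum fun i _ => ?_
        exact S1aux.term_le Φ M (t - 1 - i) (s - 1 - i)
    _ = K * ∑ s ∈ Finset.Icc 1 n, ∑ t ∈ Finset.Icc 1 n, ∑ i ∈ Finset.Icc 1 (min s t - 1),
          w ^ ((t - 1 - i) + (s - 1 - i)) := by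
        simp [Finset.mul_sum]
    _ ≤ K * (((1 - w ^ 2)⁻¹ * (2 * (1 - w)⁻¹)) * n) :=
        mul_le_mul_of_nonneg_left (S1aux.sum_main w hw0 hw1 n) hK0
    _ = K * ((1 - w ^ 2)⁻¹ * (2 * (1 - w)⁻¹)) * n := by ring
end

section
/- Let Φ be the companion matrix of (φ_1,...,φ_p), A11 = (I_p − ∑_{k=1}^p φ_k Φ^k)⁻¹ (assumed to exist), δ_p the first basis vector of ℝ^p, and R the p×p matrix whose j-th column is Φ^{j−1} A11 δ_p for j = 1,...,p. Then with φ = (φ_1,...,φ_p)ᵀ, we have φᵀ R φ = δ_pᵀ (∑_{k=1}^p φ_k Φ^k) A11 δ_p, and hence φᵀ R φ − δ_pᵀ A11 δ_p = −1. -/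
open Matrix Finset

/-- The p×p companion matrix with first row `φ` and subdiagonal identity block. -/
def companion {p : ℕ} (φ : Fin p → ℝ) : Matrix (Fin p) (Fin p) ℝ :=
  Matrix.of fun i j => if (i : ℕ) = 0 then φ j else if (i : ℕ) = (j : ℕ) + 1 then 1 else 0

/-- With `A11 = (I - ∑_{k=1}^p φ_k Φ^k)⁻¹` and `R` the matrix whose `j`-th column is
`Φ^{j-1} A11 δ_p`, one has `φᵀ R φ = δ_pᵀ (∑_k φ_k Φ^k) A11 δ_p` and consequently
`φᵀ R φ - δ_pᵀ A11 δ_p = -1`. -/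
theorem companion_R_identity {p : ℕ} [NeZero p] (φ : Fin p → ℝ)
    (hU : IsUnit (1 - ∑ k : Fin p, φ k • (companion φ) ^ ((k : ℕ) + 1))) :
    let Φ := companion φ
    let S : Matrix (Fin p) (Fin p) ℝ := ∑ k : Fin p, φ k • Φ ^ ((k : ℕ) + 1)
    let A11 : Matrix (Fin p) (Fin p) ℝ := (1 - S)⁻¹
    let δ : Fin p → ℝ := Pi.single 0 1
    let R : Matrix (Fin p) (Fin p) ℝ :=
      Matrix.of fun i j => ((Φ ^ (j : ℕ) * A11).mulVec δ) i
    (φ ᵥ* R ⬝ᵥ φ = δ ᵥ* (S * A11) ⬝ᵥ δ) ∧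
      (φ ᵥ* R ⬝ᵥ φ - δ ᵥ* A11 ⬝ᵥ δ = -1) := by
  intro Φ S A11 δ R
  have hE : ∀ M : Matrix (Fin p) (Fin p) ℝ, δ ᵥ* M ⬝ᵥ δ = M 0 0 := by
    intro M; simp [δ, Matrix.single_one_vecMul, dotProduct_single]
  have hδΦ : δ ᵥ* Φ = φ := by
    funext j
    simp [δ, Matrix.single_one_vecMul, Φ, companion]
  have key : ∀ j : Fin p, (φ ᵥ* R) j = δ ᵥ* (Φ ^ ((j : ℕ) + 1) * A11) ⬝ᵥ δ := by
    intro j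
    have h1 : (φ ᵥ* R) j = φ ⬝ᵥ (Φ ^ (j : ℕ) * A11) *ᵥ δ := by
      simp [vecMul, dotProduct, R, mulVec]
    rw [h1, dotProduct_mulVec, ← hδΦ, vecMul_vecMul, ← mul_assoc, ← pow_succ']
  have hSsum : S * A11 = ∑ k : Fin p, φ k • (Φ ^ ((k : ℕ) + 1) * A11) := by
    rw [Finset.sum_mul]; simp [smul_mul_assoc]
  have hmain : φ ᵥ* R ⬝ᵥ φ = δ ᵥ* (S * A11) ⬝ᵥ δ := by
    have h0 : φ ᵥ* R ⬝ᵥ φ = ∑ j : Fin p, (φ ᵥ* R) j * φ j := rfl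
    rw [h0, hE, hSsum]
    simp_rw [key, hE]
    simp [Matrix.sum_apply, mul_comm]
  refine ⟨hmain, ?_⟩
  have hdet : IsUnit (1 - S).det := (Matrix.isUnit_iff_isUnit_det _).mp hU
  have hinv : (1 - S) * A11 = 1 := Matrix.mul_nonsing_inv _ hdet
  rw [sub_mul, one_mul] at hinv
  have hSA : S * A11 = A11 - 1 := by
    have h2 : S * A11 = A11 - (A11 - S * A11) := by abel
    rw [h2, hinv]
  rw [hmain, hSA, hE, hE]
  simp [Matrix.sub_apply, Matrix.one_apply]
end
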